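/- Let p be a position of w and let q be a child of p, i.e., η(p) ≤ q < η(p+1). Then the word a := w[η(p), q) is a proper prefix of φ([w(p)]) (a prefix of φ([w(p)]) with |a| < |φ([w(p)])|), and σ(q) = M·σ(p) + ψ(a). Moreover, q ↦ w[η(p), q) is a bijection between the children of p and the proper prefixes of φ([w(p)]). -/

import Mathlib

/-- The morphism φ on letters: φ(0)=03, φ(1)=43, φ(3)=1, φ(4)=01. -/
def phiLetter : ℕ → List ℕ
  | 0 => [0, 3]
  | 1 => [4, 3]
  | 3 => [1]
  | 4 => [0, 1]
  | _ => []

/-- The morphism φ on words, applied letterwise and concatenated. -/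
def phi (x : List ℕ) : List ℕ := x.flatMap phiLetter

/-- The fixed point `w` of φ beginning with 0: `w n` is the `n`-th letter of
`φ^k([0])` for any `k` with `|φ^k([0])| > n` (e.g. `k = n+1`). -/
def w (n : ℕ) : ℕ := (phi^[n + 1] [0]).getD n 0

/-- The factor `w[p, q) = (w p, …, w (q-1))`. -/
def factorW (p q : ℕ) : List ℕ := (List.range' p (q - p)).map w

/-- The Parikh map ψ, sending a word over `{0,1,3,4}` to `(|x|₀,|x|₁,|x|₃,|x|₄) ∈ ℤ⁴`. -/
def psi (x : List ℕ) : Fin 4 → ℤ :=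
  ![(x.count 0 : ℤ), (x.count 1 : ℤ), (x.count 3 : ℤ), (x.count 4 : ℤ)]

/-- The incidence matrix of φ. -/
def M : Matrix (Fin 4) (Fin 4) ℤ :=
  !![1, 0, 0, 1; 0, 0, 1, 1; 1, 1, 0, 0; 0, 1, 0, 0]

/-- `η(p) = |φ(w[0,p))|`. -/
def eta (p : ℕ) : ℕ := (phi ((List.range p).map w)).length

/-- `σ(p) = ψ(w[0,p))`, the Parikh vector of the prefix of `w` of length `p`. -/
def sigmaW (p : ℕ) : Fin 4 → ℤ := psi ((List.range p).map w)

/-- The parent of a position `x`: the unique `t` with `η(t) ≤ x < η(t+1)`. -/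
def par (x : ℕ) : ℕ := Nat.findGreatest (fun t => eta t ≤ x) x

/-! ### Auxiliary lemmas -/


def Wd (k : ℕ) : List ℕ := phi^[k] [0]

lemma phi_append (a b : List ℕ) : phi (a ++ b) = phi a ++ phi b :=
  List.flatMap_append

lemma phi_cons (a : ℕ) (x : List ℕ) : phi (a :: x) = phiLetter a ++ phi x := rfl

lemma phi_prefix {a b : List ℕ} (h : a <+: b) : phi a <+: phi b := by
  obtain ⟨c, rfl⟩ := h
  exact ⟨phi c, (phi_append a c).symm⟩

lemma Wd_succ (k : ℕ) : Wd (k + 1) = phi (Wd k) := Function.iterate_succ_apply' phi k [0]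

lemma Wd_prefix_succ (k : ℕ) : Wd k <+: Wd (k + 1) := by
  induction k with
  | zero => exact ⟨[3], rfl⟩
  | succ k ih => rw [Wd_succ, Wd_succ]; exact phi_prefix ih

lemma Wd_prefix {k m : ℕ} (h : k ≤ m) : Wd k <+: Wd m := by
  induction m with
  | zero => simp [Nat.le_zero.mp h]
  | succ m ih =>
    rcases Nat.lt_or_ge k (m + 1) with hk | hk
    · exact (ih (Nat.lt_succ_iff.mp hk)).trans (Wd_prefix_succ m)
    · have : k = m + 1 := le_antisymm h hk
      subst this; exact List.prefix_refl _

lemma Wd_letters {k : ℕ} : ∀ a ∈ Wd k, a = 0 ∨ a = 1 ∨ a = 3 ∨ a = 4 := by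
  induction k with
  | zero => intro a ha; simp [Wd] at ha; tauto
  | succ k ih =>
    intro a ha
    rw [Wd_succ] at ha
    simp only [phi, List.mem_flatMap] at ha
    obtain ⟨b, hb, hab⟩ := ha
    rcases ih b hb with rfl | rfl | rfl | rfl <;> simp [phiLetter] at hab <;> tauto

lemma Wd_head (k : ℕ) : ∃ t, Wd k = 0 :: t := by
  induction k with
  | zero => exact ⟨[], rfl⟩
  | succ k ih =>
    obtain ⟨t, ht⟩ := ih
    exact ⟨3 :: phi t, by rw [Wd_succ, ht, phi_cons]; rfl⟩

lemma length_le_phi {x : List ℕ} (hx : ∀ a ∈ x, a = 0 ∨ a = 1 ∨ a = 3 ∨ a = 4) :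
    x.length ≤ (phi x).length := by
  induction x with
  | nil => simp [phi]
  | cons a x ih =>
    rw [phi_cons, List.length_append, List.length_cons]
    have h1 : 1 ≤ (phiLetter a).length := by
      rcases hx a (by simp) with rfl | rfl | rfl | rfl <;> simp [phiLetter]
    have := ih (fun b hb => hx b (by simp [hb]))
    omega

lemma Wd_length (k : ℕ) : k + 1 ≤ (Wd k).length := by
  induction k with
  | zero => simp [Wd]
  | succ k ih =>
    obtain ⟨t, ht⟩ := Wd_head k
    have ht' : ∀ a ∈ t, a = 0 ∨ a = 1 ∨ a = 3 ∨ a = 4 := by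
      intro a ha; exact Wd_letters a (by rw [ht]; simp [ha])
    have := length_le_phi ht'
    have hlen : (Wd k).length = t.length + 1 := by rw [ht]; simp
    rw [Wd_succ, ht, phi_cons]
    simp only [List.length_append]
    have : (phiLetter 0).length = 2 := rfl
    omega

lemma Wd_getElem_stable {n k m : ℕ} (hm : k ≤ m) (h : n < (Wd k).length) :
    (Wd k)[n] = (Wd m)[n]'(lt_of_lt_of_le h (Wd_prefix hm).length_le) :=
  (Wd_prefix hm).getElem h

lemma w_eq_getElem {n k : ℕ} (h : n < (Wd k).length) : w n = (Wd k)[n] := by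
  have hn1 : n < (Wd (n + 1)).length := lt_of_lt_of_le (by omega) (Wd_length (n + 1))
  have hw : w n = (Wd (n + 1))[n] := by
    rw [w, ← Wd]; exact List.getD_eq_getElem _ _ hn1
  rcases le_total k (n + 1) with hk | hk
  · exact hw.trans (Wd_getElem_stable hk h).symm
  · exact hw.trans (Wd_getElem_stable hk hn1)

lemma prefixW_eq_take {p k : ℕ} (h : p ≤ (Wd k).length) :
    (List.range p).map w = (Wd k).take p := by
  apply List.ext_getElem
  · simp [Nat.min_eq_left h]
  · intro i h1 h2
    simp only [List.getElem_map, List.getElem_range, List.getElem_take]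
    simp at h1
    exact w_eq_getElem (lt_of_lt_of_le h1 h)

lemma w_letters (n : ℕ) : w n = 0 ∨ w n = 1 ∨ w n = 3 ∨ w n = 4 := by
  have hn1 : n < (Wd (n + 1)).length := lt_of_lt_of_le (by omega) (Wd_length (n + 1))
  rw [w_eq_getElem hn1]
  exact Wd_letters _ (List.getElem_mem hn1)

lemma phi_prefixW (p : ℕ) : phi ((List.range p).map w) = (List.range (eta p)).map w := by
  have hp : p ≤ (Wd p).length := le_trans (by omega) (Wd_length p)
  have h1 : (List.range p).map w = (Wd p).take p := prefixW_eq_take hp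
  have h2 : phi ((List.range p).map w) <+: Wd (p + 1) := by
    rw [Wd_succ, h1]; exact phi_prefix (List.take_prefix p (Wd p))
  have h3 : eta p ≤ (Wd (p + 1)).length := h2.length_le
  rw [prefixW_eq_take h3]
  exact List.prefix_iff_eq_take.mp h2

lemma range'_split {s t u : ℕ} (h1 : s ≤ t) (h2 : t ≤ u) :
    List.range' s (u - s) = List.range' s (t - s) ++ List.range' t (u - t) := by
  have := List.range'_append (s := s) (m := t - s) (n := u - t) (step := 1)
  simp only [Nat.one_mul] at this
  have h3 : s + (t - s) = t := by omega
  have h4 : t - s + (u - t) = u - s := by omega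
  rw [h3, h4] at this
  exact this.symm

lemma prefixW_append {p q : ℕ} (h : p ≤ q) :
    (List.range q).map w = (List.range p).map w ++ factorW p q := by
  rw [factorW, ← List.map_append]
  congr 1
  rw [List.range_eq_range', List.range_eq_range']
  have := range'_split (Nat.zero_le p) h
  simpa using this

lemma factorW_append {p q r : ℕ} (h1 : p ≤ q) (h2 : q ≤ r) :
    factorW p r = factorW p q ++ factorW q r := by
  rw [factorW, factorW, factorW, ← List.map_append]
  congr 1
  exact range'_split h1 h2

lemma factorW_length (p q : ℕ) : (factorW p q).length = q - p := by simp [factorW]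

lemma prefixW_length (p : ℕ) : ((List.range p).map w).length = p := by simp

lemma eta_succ_eq (p : ℕ) :
    (List.range (eta (p+1))).map w = (List.range (eta p)).map w ++ phi [w p] := by
  rw [← phi_prefixW (p+1), ← phi_prefixW p, ← phi_append]
  congr 1
  have := prefixW_append (Nat.le_succ p)
  rw [this]
  congr 1
  rw [factorW]
  simp

lemma eta_succ (p : ℕ) : eta (p + 1) = eta p + (phi [w p]).length := by
  have := congrArg List.length (eta_succ_eq p)
  simpa using this

lemma factorW_eta (p : ℕ) : factorW (eta p) (eta (p + 1)) = phi [w p] := by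
  have h1 : eta p ≤ eta (p + 1) := by rw [eta_succ]; omega
  have h2 := prefixW_append h1
  have h3 := eta_succ_eq p
  rw [h2] at h3
  exact List.append_cancel_left h3

lemma factorW_take {p q r : ℕ} (h1 : p ≤ q) (h2 : q ≤ r) :
    factorW p q = (factorW p r).take (q - p) := by
  rw [factorW_append h1 h2, ← factorW_length p q, List.take_left]

lemma psi_append (a b : List ℕ) : psi (a ++ b) = psi a + psi b := by
  funext i
  fin_cases i <;> simp [psi, List.count_append]

lemma psi_phiLetter {a : ℕ} (ha : a = 0 ∨ a = 1 ∨ a = 3 ∨ a = 4) :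
    psi (phiLetter a) = M.mulVec (psi [a]) := by
  rcases ha with rfl | rfl | rfl | rfl <;>
  · funext i
    fin_cases i <;>
      simp [psi, phiLetter, M, Matrix.mulVec, dotProduct, Fin.sum_univ_four,
        List.count_cons, List.count_nil]

lemma psi_phi {x : List ℕ} (hx : ∀ a ∈ x, a = 0 ∨ a = 1 ∨ a = 3 ∨ a = 4) :
    psi (phi x) = M.mulVec (psi x) := by
  induction x with
  | nil =>
    have h0 : psi [] = 0 := by funext i; fin_cases i <;> simp [psi]
    show psi [] = M.mulVec (psi [])
    rw [h0, Matrix.mulVec_zero]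
  | cons a x ih =>
    have hcons : psi (a :: x) = psi [a] + psi x := by
      have : (a :: x) = [a] ++ x := rfl
      rw [this, psi_append]
    rw [phi_cons, psi_append, psi_phiLetter (hx a (by simp)),
      ih (fun b hb => hx b (by simp [hb])), hcons, Matrix.mulVec_add]

/-- For a child `q` of `p` (i.e. `η(p) ≤ q < η(p+1)`), the word
`a = w[η(p), q)` is a proper prefix of `φ([w p])` and `σ(q) = M·σ(p) + ψ(a)`;
moreover `q ↦ w[η(p), q)` is a bijection from the children of `p` onto the proper
prefixes of `φ([w p])`. -/
theorem children_and_proper_prefixes :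
    (∀ p q : ℕ, eta p ≤ q → q < eta (p + 1) →
      (factorW (eta p) q <+: phi [w p]) ∧
      (factorW (eta p) q).length < (phi [w p]).length ∧
      sigmaW q = M.mulVec (sigmaW p) + psi (factorW (eta p) q)) ∧
    ∀ p : ℕ, Set.BijOn (fun q => factorW (eta p) q)
      {q | eta p ≤ q ∧ q < eta (p + 1)}
      {a | (a <+: phi [w p]) ∧ a.length < (phi [w p]).length} := by
  have key : ∀ p q : ℕ, eta p ≤ q → q < eta (p + 1) →
      (factorW (eta p) q <+: phi [w p]) ∧
      (factorW (eta p) q).length < (phi [w p]).length ∧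
      sigmaW q = M.mulVec (sigmaW p) + psi (factorW (eta p) q) := by
    intro p q h1 h2
    have hle : q ≤ eta (p + 1) := le_of_lt h2
    have hfac : factorW (eta p) q = (phi [w p]).take (q - eta p) := by
      rw [factorW_take h1 hle, factorW_eta]
    refine ⟨?_, ?_, ?_⟩
    · rw [hfac]; exact List.take_prefix _ _
    · rw [factorW_length]
      have := eta_succ p
      omega
    · have hsplit := prefixW_append h1
      rw [sigmaW, sigmaW, hsplit, psi_append, ← phi_prefixW p, psi_phi]
      intro a ha
      simp only [List.mem_map, List.mem_range] at ha
      obtain ⟨n, _, rfl⟩ := ha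
      exact w_letters n
  refine ⟨key, fun p => ⟨?_, ?_, ?_⟩⟩
  · intro q hq
    exact ⟨(key p q hq.1 hq.2).1, (key p q hq.1 hq.2).2.1⟩
  · intro q1 hq1 q2 hq2 heq
    have l1 : (factorW (eta p) q1).length = q1 - eta p := factorW_length _ _
    have l2 : (factorW (eta p) q2).length = q2 - eta p := factorW_length _ _
    have := congrArg List.length heq
    simp only at this
    rw [l1, l2] at this
    have := hq1.1; have := hq2.1
    omega
  · intro a ha
    obtain ⟨hpre, hlen⟩ := ha
    refine ⟨eta p + a.length, ⟨by omega, ?_⟩, ?_⟩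
    · rw [eta_succ]; omega
    · show factorW (eta p) (eta p + a.length) = a
      have h2 : eta p + a.length ≤ eta (p + 1) := by rw [eta_succ]; omega
      rw [factorW_take (by omega) h2, factorW_eta]
      have h4 : eta p + a.length - eta p = a.length := by omega
      rw [h4]
      exact (List.prefix_iff_eq_take.mp hpre).symm
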